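/- For n ≥ 14, Σ_{k=1}^{n} (1/k)·binomial(n,k) ≤ 2^{n+1} / (n − 1 − 2/(n−5)). -/

import Mathlib

open Finset

noncomputable def S (n : ℕ) : ℝ := ∑ k ∈ Finset.Icc 1 n, (1 / (k : ℝ)) * (n.choose k : ℝ)

lemma S_range (n : ℕ) : S n = ∑ k ∈ Finset.range n, (1 / ((k:ℝ)+1)) * (n.choose (k+1) : ℝ) := by
  rw [S]
  rw [show Finset.Icc 1 n = Finset.Ico 1 (n+1) by rfl]
  rw [Finset.sum_Ico_eq_sum_range]
  simp [add_comm]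

lemma S_rec (n : ℕ) : S (n+1) = S n + (2^(n+1) - 1)/((n:ℝ)+1) := by
  rw [S_range, S_range]
  have h1 : ∀ k ∈ Finset.range (n+1), (1 / ((k:ℝ)+1)) * ((n+1).choose (k+1) : ℝ)
      = (1 / ((k:ℝ)+1)) * (n.choose k : ℝ) + (1 / ((k:ℝ)+1)) * (n.choose (k+1) : ℝ) := by
    intro k _
    rw [Nat.choose_succ_succ]
    push_cast
    ring
  rw [Finset.sum_congr rfl h1, Finset.sum_add_distrib]
  have h2 : ∑ k ∈ Finset.range (n+1), (1 / ((k:ℝ)+1)) * (n.choose (k+1) : ℝ)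
      = ∑ k ∈ Finset.range n, (1 / ((k:ℝ)+1)) * (n.choose (k+1) : ℝ) := by
    rw [Finset.sum_range_succ, Nat.choose_succ_self]
    simp
  rw [h2, add_comm]
  congr 1
  have h3 : ∀ k ∈ Finset.range (n+1), (1 / ((k:ℝ)+1)) * (n.choose k : ℝ)
      = ((n+1).choose (k+1) : ℝ) / ((n:ℝ)+1) := by
    intro k _
    have := Nat.add_one_mul_choose_eq n k
    have h4 : ((n:ℝ)+1) * (n.choose k : ℝ) = (((n+1).choose (k+1) : ℝ)) * ((k:ℝ)+1) := by
      exact_mod_cast congrArg (Nat.cast (R := ℝ)) this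
    have hk : ((k:ℝ)+1) ≠ 0 := by positivity
    have hn : ((n:ℝ)+1) ≠ 0 := by positivity
    field_simp
    push_cast at h4 ⊢
    linarith [h4]
  rw [Finset.sum_congr rfl h3, ← Finset.sum_div]
  congr 1
  have h5 : ∑ k ∈ Finset.range (n+1), ((n+1).choose (k+1)) = 2^(n+1) - 1 := by
    have h := Nat.sum_range_choose (n+1)
    have h' := Finset.sum_range_succ' (fun i => (n+1).choose i) (n+1)
    simp only [Nat.choose_zero_right] at h'
    omega
  have h6 : ((2:ℝ)^(n+1) - 1) = ((2^(n+1) - 1 : ℕ) : ℝ) := by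
    have : 1 ≤ 2^(n+1) := Nat.one_le_two_pow
    push_cast [this]
    ring
  rw [h6]
  exact_mod_cast congrArg (Nat.cast (R := ℝ)) h5

lemma step (x p : ℝ) (hx : 14 ≤ x) (hp : 1 ≤ p) :
    p / (x - 1 - 2/(x-5)) + (p - 1)/(x+1) ≤ (2*p) / ((x+1) - 1 - 2/((x+1)-5)) := by
  have h5 : (0:ℝ) < x - 5 := by linarith
  have h4 : (0:ℝ) < x - 4 := by linarith
  have h1 : (0:ℝ) < x + 1 := by linarith
  have hd1 : (0:ℝ) < x - 1 - 2/(x-5) := by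
    rw [sub_pos]
    have : 2/(x-5) ≤ 2/9 := by apply div_le_div_of_nonneg_left <;> linarith
    linarith
  have hd2 : (0:ℝ) < (x+1) - 1 - 2/((x+1)-5) := by
    have : 2/((x+1)-5) ≤ 2/9 := by apply div_le_div_of_nonneg_left <;> linarith
    linarith
  have q1 : (0:ℝ) < x^2 - 6*x + 3 := by nlinarith
  have q2 : (0:ℝ) < x^2 - 4*x - 2 := by nlinarith
  have e1 : x - 1 - 2/(x-5) = (x^2 - 6*x + 3)/(x-5) := by field_simp; ring
  have e2 : (x+1) - 1 - 2/((x+1)-5) = (x^2 - 4*x - 2)/(x-4) := by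
    rw [show x+1-5 = x-4 by ring]
    field_simp
    ring
  rw [e1, e2, div_div_eq_mul_div, div_div_eq_mul_div,
    div_add_div _ _ q1.ne' h1.ne', div_le_div_iff₀ (by positivity) q2]
  nlinarith [mul_nonneg (by linarith : (0:ℝ) ≤ p) (by linarith : (0:ℝ) ≤ x-14), mul_pos q1 q2]

theorem stmt9 (n : ℕ) (hn : 14 ≤ n) :
    ∑ k ∈ Finset.Icc 1 n, (1 / (k : ℝ)) * (n.choose k : ℝ) ≤
      2 ^ (n + 1) / ((n : ℝ) - 1 - 2 / ((n : ℝ) - 5)) := by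
  have key : ∀ m : ℕ, 14 ≤ m → S m ≤ 2 ^ (m + 1) / ((m : ℝ) - 1 - 2 / ((m : ℝ) - 5)) := by
    intro m hm
    induction m, hm using Nat.le_induction with
    | base =>
      rw [S]
      norm_num [Finset.sum_Icc_succ_top, Nat.choose]
    | succ m hm ih =>
      rw [S_rec]
      have hx : (14:ℝ) ≤ (m:ℝ) := by exact_mod_cast hm
      have hp : (1:ℝ) ≤ 2^(m+1) := by
        have h := pow_le_pow_right₀ (by norm_num : (1:ℝ) ≤ 2) (Nat.zero_le (m+1))
        simpa using h
      have := step (m:ℝ) (2^(m+1)) hx hp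
      push_cast
      calc S m + (2^(m+1) - 1)/((m:ℝ)+1)
          ≤ 2^(m+1) / ((m:ℝ) - 1 - 2/((m:ℝ)-5)) + (2^(m+1) - 1)/((m:ℝ)+1) := by linarith [ih]
        _ ≤ (2*2^(m+1)) / (((m:ℝ)+1) - 1 - 2/(((m:ℝ)+1)-5)) := this
        _ = 2^(m+1+1) / (((m:ℝ)+1) - 1 - 2/(((m:ℝ)+1)-5)) := by ring_nf
  exact key n hn
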